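/- Let T be a homeomorphism of a compact metric space X and let (x,y) be an entropy pair for T. Then for every continuous function f : X → ℂ with f(x) ≠ f(y), the pseudo-metric d_f(z,w) = |f(z) − f(w)| satisfies h_{d_f}(T) > 0. -/

import Mathlib

/-- Minimal number of "itinerary sets" `⋂_{k<n} T^{-k} U_k`, with each `U_k ∈ 𝒰`,
needed to cover `S`; i.e. `N(𝒰 ∨ T⁻¹𝒰 ∨ ⋯ ∨ T^{-(n-1)}𝒰)` relative to `S`. -/
noncomputable def coverN {X : Type*} (S : Set X) (T : X → X) (𝒰 : Set (Set X)) (n : ℕ) : ℕ :=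
  sInf {m : ℕ | ∃ c : Fin m → Fin n → Set X,
    (∀ j k, c j k ∈ 𝒰) ∧ S ⊆ ⋃ j, ⋂ k : Fin n, T^[(k : ℕ)] ⁻¹' c j k}

/-- Topological entropy of `T` on `S` via finite open covers, with values in `EReal`. -/
noncomputable def coverEntropyOpen {X : Type*} [TopologicalSpace X]
    (S : Set X) (T : X → X) : EReal :=
  ⨆ 𝒰 : {U : Set (Set X) // U.Finite ∧ (∀ V ∈ U, IsOpen V) ∧ S ⊆ ⋃₀ U},
    Filter.limsup (fun n : ℕ => ((Real.log (coverN S T 𝒰 n) / n : ℝ) : EReal)) Filter.atTop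

/-- `E` is `(n,ε)`-separated for `T` with respect to the (pseudo-)metric `d`. -/
def IsSepOn {X : Type*} (d : X → X → ℝ) (T : X → X) (n : ℕ) (ε : ℝ) (E : Set X) : Prop :=
  ∀ x ∈ E, ∀ y ∈ E, x ≠ y → ∃ k < n, ε < d (T^[k] x) (T^[k] y)

/-- The maximal cardinality of an `(n,ε)`-separated subset of `S`. -/
noncomputable def sepCount {X : Type*} (S : Set X) (d : X → X → ℝ) (T : X → X)
    (n : ℕ) (ε : ℝ) : ℕ :=
  sSup {m : ℕ | ∃ E : Finset X, ↑E ⊆ S ∧ IsSepOn d T n ε ↑E ∧ E.card = m}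

/-- Topological entropy of `T` on `S` via `(n,ε)`-separated sets, with values in `EReal`. -/
noncomputable def sepEntropy {X : Type*} (S : Set X) (d : X → X → ℝ) (T : X → X) : EReal :=
  ⨆ ε : {e : ℝ // 0 < e},
    Filter.limsup (fun n : ℕ => ((Real.log (sepCount S d T n ε) / n : ℝ) : EReal)) Filter.atTop

/-- if `(x,y)` is an entropy pair for a homeomorphism `T` of a compact
metric space, then for every continuous `f` with `f x ≠ f y`, the entropy of `T` with
respect to the pseudo-metric `d_f(z,w) = |f z − f w|` is positive. -/
theorem entropy_pair_positive_pseudometric_entropy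
    {X : Type*} [MetricSpace X] [CompactSpace X]
    (T : X ≃ₜ X) (x y : X) (hxy : x ≠ y)
    (hpair : ∀ U V : Set X, IsOpen U → IsOpen V → U ∪ V = Set.univ →
      x ∈ interior Uᶜ → y ∈ interior Vᶜ →
      0 < Filter.limsup
        (fun n : ℕ => ((Real.log (coverN Set.univ (⇑T) {U, V} n) / n : ℝ) : EReal))
        Filter.atTop)
    (f : X → ℂ) (hf : Continuous f) (hfxy : f x ≠ f y) :
    0 < sepEntropy Set.univ (fun z w => ‖f z - f w‖) (⇑T) := by
  classical
  set d : X → X → ℝ := fun z w => ‖f z - f w‖ with hd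
  have hdsymm : ∀ z w, d z w = d w z := fun z w => by
    simp only [hd]; rw [norm_sub_rev]
  have hdself : ∀ z, d z z = 0 := fun z => by simp [hd]
  have hε₀ : (0 : ℝ) < ‖f x - f y‖ :=
    norm_pos_iff.mpr (sub_ne_zero.mpr hfxy)
  set ε₀ : ℝ := ‖f x - f y‖ with hε₀def
  set ε : ℝ := ε₀ / 3 with hεdef
  set ε' : ℝ := ε₀ / 7 with hε'def
  have hεpos : 0 < ε := by positivity
  have hε'pos : 0 < ε' := by positivity
  set U : Set X := {z | ε < ‖f z - f x‖} with hU
  set V : Set X := {z | ε < ‖f z - f y‖} with hV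
  have hUopen : IsOpen U :=
    isOpen_lt continuous_const (continuous_norm.comp (hf.sub continuous_const))
  have hVopen : IsOpen V :=
    isOpen_lt continuous_const (continuous_norm.comp (hf.sub continuous_const))
  have hUV : U ∪ V = Set.univ := by
    ext z
    simp only [Set.mem_union, Set.mem_univ, iff_true, hU, hV, Set.mem_setOf_eq]
    by_contra hcon
    push_neg at hcon
    obtain ⟨h1, h2⟩ := hcon
    have htri : ε₀ ≤ ‖f x - f z‖ + ‖f z - f y‖ :=
      norm_sub_le_norm_sub_add_norm_sub (f x) (f z) (f y)
    rw [norm_sub_rev] at htri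
    have : ε₀ / 3 + ε₀ / 3 < ε₀ := by linarith
    linarith
  have hxint : x ∈ interior Uᶜ := by
    rw [mem_interior]
    refine ⟨{z | ‖f z - f x‖ < ε}, ?_, ?_, ?_⟩
    · intro z hz
      simp only [Set.mem_setOf_eq] at hz
      simp only [Set.mem_compl_iff, hU, Set.mem_setOf_eq, not_lt]
      linarith
    · exact isOpen_lt (continuous_norm.comp (hf.sub continuous_const)) continuous_const
    · simp [hεpos]
  have hyint : y ∈ interior Vᶜ := by
    rw [mem_interior]
    refine ⟨{z | ‖f z - f y‖ < ε}, ?_, ?_, ?_⟩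
    · intro z hz
      simp only [Set.mem_setOf_eq] at hz
      simp only [Set.mem_compl_iff, hV, Set.mem_setOf_eq, not_lt]
      linarith
    · exact isOpen_lt (continuous_norm.comp (hf.sub continuous_const)) continuous_const
    · simp [hεpos]
  -- bounded cardinality of separated sets
  have hBdd : ∀ n : ℕ, BddAbove {m : ℕ | ∃ E : Finset X,
      ↑E ⊆ (Set.univ : Set X) ∧ IsSepOn d (⇑T) n ε' ↑E ∧ E.card = m} := by
    intro n
    set g : X → (Fin n → ℂ) := fun z k => f (T^[(k : ℕ)] z) with hg
    have hgcont : Continuous g :=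
      continuous_pi fun k => hf.comp (T.continuous.iterate _)
    have hcomp : IsCompact (g '' Set.univ) := (isCompact_univ).image hgcont
    obtain ⟨t, htfin, htcov⟩ :=
      (Metric.totallyBounded_iff.mp hcomp.totallyBounded) (ε' / 2) (by positivity)
    refine ⟨htfin.toFinset.card, ?_⟩
    rintro m ⟨E, -, hsep, rfl⟩
    -- map each e ∈ E to a center in t
    have hmem : ∀ e : X, ∃ c ∈ t, g e ∈ Metric.ball c (ε' / 2) := by
      intro e
      have : g e ∈ ⋃ y ∈ t, Metric.ball y (ε' / 2) :=
        htcov ⟨e, Set.mem_univ e, rfl⟩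
      simpa using this
    set φ : X → (Fin n → ℂ) := fun e => (hmem e).choose with hφ
    have hφt : ∀ e, φ e ∈ t ∧ g e ∈ Metric.ball (φ e) (ε' / 2) := fun e =>
      ⟨(hmem e).choose_spec.1, (hmem e).choose_spec.2⟩
    refine Finset.card_le_card_of_injOn φ (fun e _ => htfin.mem_toFinset.mpr (hφt e).1) ?_
    intro a ha b hb hab
    by_contra hne
    obtain ⟨k, hk, hgt⟩ := hsep a ha b hb hne
    have h1 : dist (g a) (φ a) < ε' / 2 := Metric.mem_ball.mp (hφt a).2
    have h2 : dist (g b) (φ b) < ε' / 2 := Metric.mem_ball.mp (hφt b).2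
    rw [← hab] at h2
    have hdistab : dist (g a) (g b) < ε' := by
      have := dist_triangle (g a) (φ a) (g b)
      rw [dist_comm (φ a) (g b)] at this
      linarith
    have hcomp2 : dist (g a ⟨k, hk⟩) (g b ⟨k, hk⟩) ≤ dist (g a) (g b) :=
      dist_le_pi_dist (g a) (g b) ⟨k, hk⟩
    have : d (T^[k] a) (T^[k] b) ≤ dist (g a) (g b) := by
      simpa [hg, hd, Complex.dist_eq] using hcomp2
    linarith
  -- coverN ≤ sepCount
  have hcover : ∀ n : ℕ,
      coverN Set.univ (⇑T) {U, V} n ≤ sepCount Set.univ d (⇑T) n ε' := by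
    intro n
    set s : Set ℕ := {m : ℕ | ∃ E : Finset X,
      ↑E ⊆ (Set.univ : Set X) ∧ IsSepOn d (⇑T) n ε' ↑E ∧ E.card = m} with hs
    have hsep0 : (0 : ℕ) ∈ s := ⟨∅, by simp, by intro a ha; simp at ha, by simp⟩
    have hsC : sepCount Set.univ d (⇑T) n ε' = sSup s := rfl
    have hmax : sSup s ∈ s := Nat.sSup_mem ⟨0, hsep0⟩ (hBdd n)
    obtain ⟨E, -, hsepE, hcard⟩ := hmax
    -- maximality: E is (n, ε')-spanning
    have hspan : ∀ z : X, ∃ e ∈ E, ∀ k < n, d (T^[k] z) (T^[k] e) ≤ ε' := by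
      intro z
      by_contra hcon
      push_neg at hcon
      have hz : z ∉ E := by
        intro hz
        obtain ⟨k, hk, hgt⟩ := hcon z hz
        rw [hdself] at hgt
        linarith
      have hsep' : IsSepOn d (⇑T) n ε' ↑(insert z E) := by
        intro a ha b hb hab
        rw [Finset.coe_insert, Set.mem_insert_iff] at ha hb
        rcases ha with rfl | ha
        · rcases hb with rfl | hb
          · exact absurd rfl hab
          · exact hcon b hb
        · rcases hb with rfl | hb
          · obtain ⟨k, hk, hgt⟩ := hcon a ha
            exact ⟨k, hk, by rw [hdsymm]; exact hgt⟩
          · exact hsepE a (by exact_mod_cast ha) b (by exact_mod_cast hb) hab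
      have hmem' : (insert z E).card ∈ s := ⟨insert z E, by simp, hsep', rfl⟩
      have hle := le_csSup (hBdd n) hmem'
      rw [← hs] at hle
      rw [Finset.card_insert_of_notMem hz, hcard] at hle
      omega
    -- build the cover indexed by E
    rw [hsC, ← hcard]
    apply Nat.sInf_le
    refine ⟨fun j k => if ε + ε' <
        ‖f (T^[(k : ℕ)] ((E.equivFin.symm j : X))) - f x‖ then U else V, ?_, ?_⟩
    · intro j k
      dsimp only
      split_ifs with h
      · exact Set.mem_insert _ _
      · exact Set.mem_insert_of_mem _ rfl
    · intro z _
      obtain ⟨e, heE, he⟩ := hspan z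
      refine Set.mem_iUnion.mpr ⟨E.equivFin ⟨e, heE⟩, Set.mem_iInter.mpr fun k => ?_⟩
      rw [Set.mem_preimage]
      dsimp only
      have heq : ((E.equivFin.symm (E.equivFin ⟨e, heE⟩) : X)) = e := by
        rw [Equiv.symm_apply_apply]
      rw [heq]
      have hk := he (k : ℕ) k.isLt
      have hdk : ‖f (T^[(k : ℕ)] z) - f (T^[(k : ℕ)] e)‖ ≤ ε' := hk
      split_ifs with h
      · -- T^[k] z ∈ U
        show ε < ‖f (T^[(k : ℕ)] z) - f x‖
        have htri : ‖f (T^[(k : ℕ)] e) - f x‖ ≤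
            ‖f (T^[(k : ℕ)] e) - f (T^[(k : ℕ)] z)‖ +
            ‖f (T^[(k : ℕ)] z) - f x‖ :=
          norm_sub_le_norm_sub_add_norm_sub _ _ _
        have hsym : ‖f (T^[(k : ℕ)] e) - f (T^[(k : ℕ)] z)‖ =
            ‖f (T^[(k : ℕ)] z) - f (T^[(k : ℕ)] e)‖ :=
          norm_sub_rev _ _
        linarith
      · -- T^[k] z ∈ V
        show ε < ‖f (T^[(k : ℕ)] z) - f y‖
        push_neg at h
        have htri1 : ‖f (T^[(k : ℕ)] z) - f x‖ ≤
            ‖f (T^[(k : ℕ)] z) - f (T^[(k : ℕ)] e)‖ +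
            ‖f (T^[(k : ℕ)] e) - f x‖ :=
          norm_sub_le_norm_sub_add_norm_sub _ _ _
        have htri2 : ε₀ ≤ ‖f x - f (T^[(k : ℕ)] z)‖ +
            ‖f (T^[(k : ℕ)] z) - f y‖ :=
          norm_sub_le_norm_sub_add_norm_sub _ _ _
        rw [norm_sub_rev (f x)] at htri2
        rw [hεdef, hε'def] at *
        linarith
  -- entropy comparison
  have hpos := hpair U V hUopen hVopen hUV hxint hyint
  have hlogmono : ∀ n : ℕ,
      Real.log (coverN Set.univ (⇑T) {U, V} n) ≤ Real.log (sepCount Set.univ d (⇑T) n ε') := by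
    intro n
    rcases Nat.eq_zero_or_pos (coverN Set.univ (⇑T) {U, V} n) with h0 | hpos'
    · rw [h0]
      simp only [Nat.cast_zero, Real.log_zero]
      rcases Nat.eq_zero_or_pos (sepCount Set.univ d (⇑T) n ε') with h1 | h1
      · simp [h1]
      · exact Real.log_nonneg (by exact_mod_cast h1)
    · exact Real.log_le_log (by exact_mod_cast hpos') (by exact_mod_cast hcover n)
  have hlim : Filter.limsup
      (fun n : ℕ => ((Real.log (coverN Set.univ (⇑T) {U, V} n) / n : ℝ) : EReal)) Filter.atTop ≤
      Filter.limsup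
      (fun n : ℕ => ((Real.log (sepCount Set.univ d (⇑T) n ε') / n : ℝ) : EReal)) Filter.atTop := by
    apply Filter.limsup_le_limsup
    · apply Filter.Eventually.of_forall
      intro n
      exact EReal.coe_le_coe_iff.mpr
        (div_le_div_of_nonneg_right (hlogmono n) (Nat.cast_nonneg n))
    · exact Filter.isCobounded_le_of_bot
    · exact Filter.isBounded_le_of_top
  have hfinal : Filter.limsup
      (fun n : ℕ => ((Real.log (sepCount Set.univ d (⇑T) n ε') / n : ℝ) : EReal)) Filter.atTop ≤
      sepEntropy Set.univ d (⇑T) :=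
    le_iSup (fun e : {e : ℝ // 0 < e} => Filter.limsup
      (fun n : ℕ => ((Real.log (sepCount Set.univ d (⇑T) n (e : ℝ)) / n : ℝ) : EReal)) Filter.atTop)
      ⟨ε', hε'pos⟩
  calc (0 : EReal) < _ := hpos
    _ ≤ _ := hlim
    _ ≤ _ := hfinal
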